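/- Let {[a_m,b_m] : m ∈ ℕ} be a standard sequence, let (x_m) be a selector sequence for it (a_m < x_m < b_m for all m), and let u ∈ ℕ*. Then x_u := u-lim{x_m} is a cut point of the continuum [a_m,b_m]_u; that is, [a_m,b_m]_u ∖ {x_u} is not connected. -/

import Mathlib

open Set Topology Filter

noncomputable section

/-- The unit interval `[0,1] ⊆ ℝ`. -/
abbrev UnitI : Type := Set.Icc (0:ℝ) 1

/-- The space `𝕄 = ℕ × [0,1]`. -/
abbrev Mspace : Type := ℕ × UnitI

/-- `β𝕄`, the Stone–Čech compactification of `𝕄`. -/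
abbrev betaM : Type := StoneCech Mspace

/-- The copy of `𝕄` inside `β𝕄`. -/
def Mcopy : Set betaM := Set.range (stoneCechUnit : Mspace → betaM)

/-- `𝕄* = β𝕄 ∖ 𝕄`. -/
def MstarS : Set betaM := Mcopyᶜ

/-- `βℕ`, realized as the space of ultrafilters on `ℕ`. -/
abbrev betaN : Type := Ultrafilter ℕ

/-- The copy of `ℕ` inside `βℕ` (the principal ultrafilters). -/
def Ncopy : Set betaN := Set.range (pure : ℕ → betaN)

/-- `ℕ* = βℕ ∖ ℕ`. -/
def NstarS : Set betaN := Ncopyᶜ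

/-- The interval `{n} × [s,t]` inside `𝕄`. -/
def colIcc (n : ℕ) (s t : ℝ) : Set Mspace :=
  {p : Mspace | p.1 = n ∧ s ≤ (p.2 : ℝ) ∧ (p.2 : ℝ) ≤ t}

/-- The data `(col, lo, hi)` describes a standard sequence: the intervals
`{col m} × [lo m, hi m]` are nondegenerate closed subintervals of single columns of `𝕄`,
pairwise disjoint, forming a locally finite family in `𝕄`. -/
def IsStdSeqData (col : ℕ → ℕ) (lo hi : ℕ → ℝ) : Prop :=
  (∀ m, 0 ≤ lo m ∧ lo m < hi m ∧ hi m ≤ 1) ∧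
  (Pairwise fun m k => Disjoint (colIcc (col m) (lo m) (hi m)) (colIcc (col k) (lo k) (hi k))) ∧
  LocallyFinite (fun m => colIcc (col m) (lo m) (hi m))

/-- A standard sequence `{[a_m,b_m] : m ∈ ℕ}`. -/
structure StdSeq where
  col : ℕ → ℕ
  lo : ℕ → ℝ
  hi : ℕ → ℝ
  std : IsStdSeqData col lo hi

/-- The `m`-th interval `[a_m,b_m]` of a standard sequence. -/
def StdSeq.interval (A : StdSeq) (m : ℕ) : Set Mspace := colIcc (A.col m) (A.lo m) (A.hi m)

/-- `⋃𝒜`. -/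
def StdSeq.union (A : StdSeq) : Set Mspace := ⋃ m, A.interval m

/-- `u-lim A_m = ⋂_{U ∈ u} cl_{β𝕄}(⋃_{m ∈ U} A_m)` for subsets `A_m ⊆ 𝕄`. -/
def ulim (u : Ultrafilter ℕ) (A : ℕ → Set Mspace) : Set betaM :=
  ⋂ U ∈ u, closure (stoneCechUnit '' ⋃ m ∈ U, A m)

/-- The `u`-limit point `x_u` of a sequence of points of `𝕄`. -/
def upt (u : Ultrafilter ℕ) (x : ℕ → Mspace) : betaM :=
  Ultrafilter.extend (fun m => stoneCechUnit (x m)) u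

/-- A selector sequence for a standard sequence: `a_m < x_m < b_m` for all `m`. -/
def StdSeq.Selector (A : StdSeq) (x : ℕ → Mspace) : Prop :=
  ∀ m, (x m).1 = A.col m ∧ A.lo m < ((x m).2 : ℝ) ∧ ((x m).2 : ℝ) < A.hi m


lemma isClosed_colIcc (n : ℕ) (s t : ℝ) : IsClosed (colIcc n s t) := by
  have h1 : IsClosed {p : Mspace | p.1 = n} :=
    isClosed_singleton.preimage continuous_fst
  have h2 : IsClosed {p : Mspace | s ≤ (p.2 : ℝ)} :=
    isClosed_le continuous_const (continuous_subtype_val.comp continuous_snd)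
  have h3 : IsClosed {p : Mspace | (p.2 : ℝ) ≤ t} :=
    isClosed_le (continuous_subtype_val.comp continuous_snd) continuous_const
  exact (h1.inter (h2.inter h3))

/-- Disjoint closed sets in `𝕄` have disjoint closures in `β𝕄`. -/
lemma disjoint_closure_image {C D : Set Mspace} (hC : IsClosed C) (hD : IsClosed D)
    (hdis : Disjoint C D) :
    Disjoint (closure (stoneCechUnit '' C)) (closure (stoneCechUnit '' D)) := by
  obtain ⟨f, h0, h1, hicc⟩ := exists_continuous_zero_one_of_isClosed hC hD hdis
  set g : Mspace → UnitI := fun y => ⟨f y, hicc y⟩ with hg_def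
  have hg : Continuous g := f.continuous.subtype_mk _
  set F := stoneCechExtend hg with hF
  have hFc : Continuous F := continuous_stoneCechExtend hg
  have hCsub : closure (stoneCechUnit '' C) ⊆ F ⁻¹' {(⟨0, by norm_num⟩ : UnitI)} := by
    apply closure_minimal _ (isClosed_singleton.preimage hFc)
    rintro _ ⟨c, hc, rfl⟩
    have : F (stoneCechUnit c) = g c := congrFun (stoneCechExtend_extends hg) c
    simp only [mem_preimage, mem_singleton_iff, this]
    exact Subtype.ext (by simpa [hg_def] using h0 hc)
  have hDsub : closure (stoneCechUnit '' D) ⊆ F ⁻¹' {(⟨1, by norm_num⟩ : UnitI)} := by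
    apply closure_minimal _ (isClosed_singleton.preimage hFc)
    rintro _ ⟨c, hc, rfl⟩
    have : F (stoneCechUnit c) = g c := congrFun (stoneCechExtend_extends hg) c
    simp only [mem_preimage, mem_singleton_iff, this]
    exact Subtype.ext (by simpa [hg_def] using h1 hc)
  refine Disjoint.mono hCsub hDsub ?_
  rw [Set.disjoint_left]
  intro p hp hp'
  simp only [mem_preimage, mem_singleton_iff] at hp hp'
  have : ((0:ℝ)) = 1 := by
    have := hp.symm.trans hp'
    exact congrArg Subtype.val this
  norm_num at this

/-- In `β𝕄`, `cl(C) ∩ cl(D) ⊆ cl(C ∩ D)` for closed `C, D ⊆ 𝕄`. -/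
lemma closure_image_inter {C D : Set Mspace} (hC : IsClosed C) (hD : IsClosed D) :
    closure (stoneCechUnit '' C) ∩ closure (stoneCechUnit '' D) ⊆
      closure (stoneCechUnit '' (C ∩ D)) := by
  intro q hq
  by_contra hqn
  set Z := closure (stoneCechUnit '' (C ∩ D)) with hZ
  have hZc : IsClosed Z := isClosed_closure
  have hmem : Zᶜ ∈ 𝓝 q := hZc.isOpen_compl.mem_nhds hqn
  obtain ⟨N, ⟨hNq, hNcl⟩, hNsub⟩ := (closed_nhds_basis q).mem_iff.mp hmem
  set O := interior N with hO
  have hqO : q ∈ O := mem_interior_iff_mem_nhds.mpr hNq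
  have hON : closure O ⊆ N := closure_minimal interior_subset hNcl
  set C₁ := C ∩ stoneCechUnit ⁻¹' N with hC₁
  set D₁ := D ∩ stoneCechUnit ⁻¹' N with hD₁
  have hC₁cl : IsClosed C₁ := hC.inter (hNcl.preimage continuous_stoneCechUnit)
  have hD₁cl : IsClosed D₁ := hD.inter (hNcl.preimage continuous_stoneCechUnit)
  have hdis : Disjoint C₁ D₁ := by
    rw [Set.disjoint_left]
    rintro y ⟨hyC, hyN⟩ ⟨hyD, _⟩
    have : stoneCechUnit y ∈ Z := subset_closure (mem_image_of_mem _ ⟨hyC, hyD⟩)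
    exact (hNsub hyN) this
  have key : ∀ (E : Set Mspace), q ∈ closure (stoneCechUnit '' E) →
      q ∈ closure (stoneCechUnit '' (E ∩ stoneCechUnit ⁻¹' N)) := by
    intro E hE
    have h1 : q ∈ O ∩ closure (stoneCechUnit '' E) := ⟨hqO, hE⟩
    have h2 := isOpen_interior.inter_closure h1
    refine closure_mono ?_ h2
    rintro _ ⟨hzO, e, he, rfl⟩
    exact mem_image_of_mem _ ⟨he, Set.mem_preimage.mpr (interior_subset hzO)⟩
  exact Set.disjoint_left.mp (disjoint_closure_image hC₁cl hD₁cl hdis)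
    (key C hq.1) (key D hq.2)

lemma tendsto_upt (u : Ultrafilter ℕ) (y : ℕ → Mspace) :
    Tendsto (fun m => stoneCechUnit (y m)) ↑u (𝓝 (upt u y)) := by
  have h := (ultrafilter_extend_eq_iff (f := fun m => stoneCechUnit (y m)) (b := u)
    (c := upt u y)).mp rfl
  rwa [Ultrafilter.coe_map] at h

lemma upt_mem_closure (u : Ultrafilter ℕ) (y : ℕ → Mspace) {S : Set Mspace}
    (h : ∀ᶠ m in (↑u : Filter ℕ), y m ∈ S) :
    upt u y ∈ closure (stoneCechUnit '' S) :=
  mem_closure_of_tendsto (tendsto_upt u y) (h.mono fun _ hm => mem_image_of_mem _ hm)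

lemma upt_val (u : Ultrafilter ℕ) (y : ℕ → Mspace) {φ : Mspace → UnitI}
    (hφ : Continuous φ) (c : UnitI) (h : ∀ m, φ (y m) = c) :
    stoneCechExtend hφ (upt u y) = c := by
  have h1 : Tendsto (fun m => stoneCechExtend hφ (stoneCechUnit (y m))) ↑u
      (𝓝 (stoneCechExtend hφ (upt u y))) :=
    ((continuous_stoneCechExtend hφ).tendsto _).comp (tendsto_upt u y)
  have h2 : (fun m => stoneCechExtend hφ (stoneCechUnit (y m))) = fun _ => c := by
    funext m
    rw [show stoneCechExtend hφ (stoneCechUnit (y m)) = φ (y m) from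
      congrFun (stoneCechExtend_extends hφ) (y m), h m]
  rw [h2] at h1
  exact tendsto_nhds_unique h1 tendsto_const_nhds

lemma eq_upt_of_mem (u : Ultrafilter ℕ) (x : ℕ → Mspace) (p : betaM)
    (h : ∀ U ∈ u, p ∈ closure (stoneCechUnit '' (x '' U))) : p = upt u x := by
  by_contra hne
  obtain ⟨g, h0, h1, _⟩ := exists_continuous_zero_one_of_isClosed
    (isClosed_singleton (x := p)) (isClosed_singleton (x := upt u x))
    (by simpa [Set.disjoint_singleton] using hne)
  have hgp : g p = 0 := h0 rfl
  have hgx : g (upt u x) = 1 := h1 rfl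
  have htd : Tendsto (fun m => g (stoneCechUnit (x m))) ↑u (𝓝 (1:ℝ)) := by
    have := (g.continuous.tendsto _).comp (tendsto_upt u x)
    rwa [hgx] at this
  have hev : ∀ᶠ m in (↑u : Filter ℕ), g (stoneCechUnit (x m)) ∈ Ioi (1/2 : ℝ) :=
    htd (Ioi_mem_nhds (by norm_num))
  set U : Set ℕ := {m | g (stoneCechUnit (x m)) ∈ Ioi (1/2 : ℝ)} with hU
  have hUu : U ∈ u := hev
  have hp : p ∈ closure (stoneCechUnit '' (x '' U)) := h U hUu
  have hsub : closure (stoneCechUnit '' (x '' U)) ⊆ g ⁻¹' (Ici (1/2 : ℝ)) := by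
    apply closure_minimal _ (isClosed_Ici.preimage g.continuous)
    rintro _ ⟨_, ⟨m, hmU, rfl⟩, rfl⟩
    have hm : g (stoneCechUnit (x m)) ∈ Ioi (1/2 : ℝ) := hmU
    exact le_of_lt (mem_Ioi.mp hm)
  have : (1/2 : ℝ) ≤ g p := hsub hp
  rw [hgp] at this
  norm_num at this

lemma isClosed_biUnion_lf {f : ℕ → Set Mspace} (hf : LocallyFinite f)
    (hc : ∀ m, IsClosed (f m)) (U : Set ℕ) : IsClosed (⋃ m ∈ U, f m) := by
  classical
  have heq : (⋃ m ∈ U, f m) = ⋃ m, (if m ∈ U then f m else ∅) := by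
    ext y
    simp only [mem_iUnion]
    constructor
    · rintro ⟨m, hm, hy⟩
      exact ⟨m, by simp [hm, hy]⟩
    · rintro ⟨m, hy⟩
      by_cases hm : m ∈ U
      · rw [if_pos hm] at hy; exact ⟨m, hm, hy⟩
      · rw [if_neg hm] at hy; exact absurd hy (notMem_empty y)
  rw [heq]
  refine LocallyFinite.isClosed_iUnion (hf.subset fun m => ?_) fun m => ?_
  · by_cases hm : m ∈ U <;> simp [hm]
  · by_cases hm : m ∈ U <;> simp [hm, isClosed_empty, hc m]

/-- for a selector sequence `(x_m)` of a standard sequence and `u ∈ ℕ*`,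
the point `x_u` is a cut point of the continuum `[a_m,b_m]_u`. -/
theorem upt_is_cut_point_of_ulim (A : StdSeq) (x : ℕ → Mspace) (hx : A.Selector x)
    (u : betaN) (hu : u ∈ NstarS) :
    upt u x ∈ ulim u A.interval ∧
      ¬ IsPreconnected (ulim u A.interval \ {upt u x}) := by
  obtain ⟨hbounds, hdisj, hlf⟩ := A.std
  -- left and right halves of the intervals
  set L : ℕ → Set Mspace := fun m => colIcc (A.col m) (A.lo m) ((x m).2 : ℝ) with hL
  set R : ℕ → Set Mspace := fun m => colIcc (A.col m) ((x m).2 : ℝ) (A.hi m) with hR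
  have hxmem : ∀ m, x m ∈ A.interval m := fun m =>
    ⟨(hx m).1, le_of_lt (hx m).2.1, le_of_lt (hx m).2.2⟩
  have hLsub : ∀ m, L m ⊆ A.interval m := by
    rintro m y ⟨h1, h2, h3⟩
    exact ⟨h1, h2, h3.trans (le_of_lt (hx m).2.2)⟩
  have hRsub : ∀ m, R m ⊆ A.interval m := by
    rintro m y ⟨h1, h2, h3⟩
    exact ⟨h1, (le_of_lt (hx m).2.1).trans h2, h3⟩
  have hsplit : ∀ m, A.interval m = L m ∪ R m := by
    intro m
    ext y
    constructor
    · rintro ⟨h1, h2, h3⟩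
      rcases le_total ((y.2 : ℝ)) (((x m).2 : ℝ)) with h | h
      · exact Or.inl ⟨h1, h2, h⟩
      · exact Or.inr ⟨h1, h, h3⟩
    · rintro (hy | hy)
      · exact hLsub m hy
      · exact hRsub m hy
  have hLR_same : ∀ m, L m ∩ R m ⊆ {x m} := by
    rintro m y ⟨⟨h1, _, h3⟩, ⟨_, h2', _⟩⟩
    have : y = x m := by
      refine Prod.ext (h1.trans (hx m).1.symm) (Subtype.ext (le_antisymm h3 h2'))
    simp [this]
  have hLRdiff : ∀ m k, m ≠ k → ∀ y, y ∈ L m → y ∈ R k → False := by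
    intro m k hmk y hym hyk
    exact Set.disjoint_left.mp (hdisj hmk) (hLsub m hym) (hRsub k hyk)
  have hmemxU : ∀ m (U : Set ℕ), m ∈ U → ∀ y, y ∈ L m ∩ R m → y ∈ x '' U := by
    intro m U hm y hy
    have := hLR_same m hy
    exact ⟨m, hm, (mem_singleton_iff.mp this).symm⟩
  -- basic closedness facts
  have hLcl : ∀ m, IsClosed (L m) := fun m => isClosed_colIcc _ _ _
  have hRcl : ∀ m, IsClosed (R m) := fun m => isClosed_colIcc _ _ _
  have hLlf : LocallyFinite L := hlf.subset hLsub
  have hRlf : LocallyFinite R := hlf.subset hRsub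
  have hLclU : ∀ U : Set ℕ, IsClosed (⋃ m ∈ U, L m) := fun U => isClosed_biUnion_lf hLlf hLcl U
  have hRclU : ∀ U : Set ℕ, IsClosed (⋃ m ∈ U, R m) := fun U => isClosed_biUnion_lf hRlf hRcl U
  have hLclF : IsClosed (⋃ m, L m) := hLlf.isClosed_iUnion hLcl
  have hRclF : IsClosed (⋃ m, R m) := hRlf.isClosed_iUnion hRcl
  -- intersection bounds
  have hinterL : ∀ U : Set ℕ, (⋃ m ∈ U, L m) ∩ (⋃ m, R m) ⊆ x '' U := by
    rintro U y ⟨hyL, hyR⟩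
    simp only [mem_iUnion, exists_prop] at hyL hyR
    obtain ⟨m, hmU, hym⟩ := hyL
    obtain ⟨k, hyk⟩ := hyR
    by_cases h : m = k
    · subst h; exact hmemxU m U hmU y ⟨hym, hyk⟩
    · exact (hLRdiff m k h y hym hyk).elim
  have hinterR : ∀ U : Set ℕ, (⋃ m, L m) ∩ (⋃ m ∈ U, R m) ⊆ x '' U := by
    rintro U y ⟨hyL, hyR⟩
    simp only [mem_iUnion, exists_prop] at hyL hyR
    obtain ⟨m, hym⟩ := hyL
    obtain ⟨k, hkU, hyk⟩ := hyR
    by_cases h : m = k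
    · subst h; exact hmemxU m U hkU y ⟨hym, hyk⟩
    · exact (hLRdiff m k h y hym hyk).elim
  -- the key uniqueness statement
  have hkey : ∀ p, p ∈ ulim u A.interval →
      p ∈ closure (stoneCechUnit '' (⋃ m, L m)) →
      p ∈ closure (stoneCechUnit '' (⋃ m, R m)) → p = upt u x := by
    intro p hpK hpL hpR
    refine eq_upt_of_mem u x p ?_
    intro U hU
    have h1 : p ∈ closure (stoneCechUnit '' (⋃ m ∈ U, A.interval m)) := by
      have := mem_iInter₂.mp hpK U hU
      exact this
    have hsplitU : (⋃ m ∈ U, A.interval m) = (⋃ m ∈ U, L m) ∪ (⋃ m ∈ U, R m) :=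
      calc (⋃ m ∈ U, A.interval m) = ⋃ m ∈ U, (L m ∪ R m) :=
            iUnion₂_congr fun m _ => hsplit m
        _ = (⋃ m ∈ U, L m) ∪ (⋃ m ∈ U, R m) := by simp only [iUnion_union_distrib]
    rw [hsplitU, image_union, closure_union] at h1
    rcases h1 with h1 | h1
    · have h2 := closure_image_inter (hLclU U) hRclF ⟨h1, hpR⟩
      exact closure_mono (image_mono (hinterL U)) h2
    · have h2 := closure_image_inter hLclF (hRclU U) ⟨hpL, h1⟩
      exact closure_mono (image_mono (hinterR U)) h2
  -- endpoints
  have hlo01 : ∀ m, A.lo m ∈ Icc (0:ℝ) 1 := fun m =>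
    ⟨(hbounds m).1, (le_of_lt (hbounds m).2.1).trans (hbounds m).2.2⟩
  have hhi01 : ∀ m, A.hi m ∈ Icc (0:ℝ) 1 := fun m =>
    ⟨(hbounds m).1.trans (le_of_lt (hbounds m).2.1), (hbounds m).2.2⟩
  set a : ℕ → Mspace := fun m => (A.col m, ⟨A.lo m, hlo01 m⟩) with ha
  set b : ℕ → Mspace := fun m => (A.col m, ⟨A.hi m, hhi01 m⟩) with hb
  have haL : ∀ m, a m ∈ L m := fun m => ⟨rfl, le_refl _, le_of_lt (hx m).2.1⟩
  have hbR : ∀ m, b m ∈ R m := fun m => ⟨rfl, le_of_lt (hx m).2.2, le_refl _⟩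
  have haI : ∀ m, a m ∈ A.interval m := fun m => hLsub m (haL m)
  have hbI : ∀ m, b m ∈ A.interval m := fun m => hRsub m (hbR m)
  -- membership in ulim
  have hulim : ∀ (y : ℕ → Mspace), (∀ m, y m ∈ A.interval m) → upt u y ∈ ulim u A.interval := by
    intro y hy
    refine mem_iInter₂.mpr fun U hU => ?_
    refine upt_mem_closure u y ?_
    have hUe : ∀ᶠ m in (↑u : Filter ℕ), m ∈ U := by
      rw [Filter.eventually_iff]
      simpa [Set.setOf_mem_eq] using (Ultrafilter.mem_coe.mpr hU)
    exact hUe.mono fun m hm => mem_biUnion hm (hy m)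
  have hxu_mem : upt u x ∈ ulim u A.interval := hulim x hxmem
  refine ⟨hxu_mem, ?_⟩
  -- the Urysohn function separating endpoints from selectors
  have hS0cl : IsClosed (⋃ m, ({a m} ∪ {b m} : Set Mspace)) := by
    refine LocallyFinite.isClosed_iUnion (hlf.subset fun m => ?_) fun m =>
      (isClosed_singleton.union isClosed_singleton)
    rintro y (hy | hy)
    · rw [mem_singleton_iff.mp hy]; exact haI m
    · rw [mem_singleton_iff.mp hy]; exact hbI m
  have hSxcl : IsClosed (⋃ m, ({x m} : Set Mspace)) := by
    refine LocallyFinite.isClosed_iUnion (hlf.subset fun m => ?_) fun m => isClosed_singleton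
    rintro y hy
    rw [mem_singleton_iff.mp hy]; exact hxmem m
  have hS0Sx : Disjoint (⋃ m, ({a m} ∪ {b m} : Set Mspace)) (⋃ m, ({x m} : Set Mspace)) := by
    rw [Set.disjoint_left]
    rintro y hy hy'
    simp only [mem_iUnion, mem_union, mem_singleton_iff] at hy hy'
    obtain ⟨k, hk⟩ := hy'
    obtain ⟨m, hm | hm⟩ := hy
    · by_cases h : m = k
      · subst h
        have heq : A.lo m = ((x m).2 : ℝ) := by
          rw [hm] at hk; exact congrArg (fun p : Mspace => ((p.2 : ℝ))) hk
        exact absurd heq (ne_of_lt (hx m).2.1)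
      · have hy1 : y ∈ A.interval m := by rw [hm]; exact haI m
        have hy2 : y ∈ A.interval k := by rw [hk]; exact hxmem k
        exact Set.disjoint_left.mp (hdisj h) hy1 hy2
    · by_cases h : m = k
      · subst h
        have heq : A.hi m = ((x m).2 : ℝ) := by
          rw [hm] at hk; exact congrArg (fun p : Mspace => ((p.2 : ℝ))) hk
        exact absurd heq (ne_of_gt (hx m).2.2)
      · have hy1 : y ∈ A.interval m := by rw [hm]; exact hbI m
        have hy2 : y ∈ A.interval k := by rw [hk]; exact hxmem k
        exact Set.disjoint_left.mp (hdisj h) hy1 hy2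
  obtain ⟨f, h0, h1, hicc⟩ := exists_continuous_zero_one_of_isClosed hS0cl hSxcl hS0Sx
  set φ : Mspace → UnitI := fun y => ⟨f y, hicc y⟩ with hφdef
  have hφ : Continuous φ := f.continuous.subtype_mk _
  have hFa : stoneCechExtend hφ (upt u a) = (⟨0, by norm_num⟩ : UnitI) := by
    refine upt_val u a hφ _ fun m => Subtype.ext ?_
    exact h0 (mem_iUnion.mpr ⟨m, Or.inl rfl⟩)
  have hFb : stoneCechExtend hφ (upt u b) = (⟨0, by norm_num⟩ : UnitI) := by
    refine upt_val u b hφ _ fun m => Subtype.ext ?_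
    exact h0 (mem_iUnion.mpr ⟨m, Or.inr rfl⟩)
  have hFx : stoneCechExtend hφ (upt u x) = (⟨1, by norm_num⟩ : UnitI) := by
    refine upt_val u x hφ _ fun m => Subtype.ext ?_
    exact h1 (mem_iUnion.mpr ⟨m, rfl⟩)
  have hax : upt u a ≠ upt u x := by
    intro h
    rw [h, hFx] at hFa
    have := congrArg Subtype.val hFa
    norm_num at this
  have hbx : upt u b ≠ upt u x := by
    intro h
    rw [h, hFx] at hFb
    have := congrArg Subtype.val hFb
    norm_num at this
  -- now the preconnectedness refutation
  intro hcon
  rw [isPreconnected_closed_iff] at hcon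
  have hcover : ulim u A.interval \ {upt u x} ⊆
      closure (stoneCechUnit '' (⋃ m, L m)) ∪ closure (stoneCechUnit '' (⋃ m, R m)) := by
    rintro p ⟨hpK, _⟩
    have huniv : (univ : Set ℕ) ∈ u := Filter.univ_mem
    have h1 : p ∈ closure (stoneCechUnit '' (⋃ m ∈ (univ : Set ℕ), A.interval m)) :=
      mem_iInter₂.mp hpK univ huniv
    have h2 : (⋃ m ∈ (univ : Set ℕ), A.interval m) = (⋃ m, L m) ∪ (⋃ m, R m) :=
      calc (⋃ m ∈ (univ : Set ℕ), A.interval m) = ⋃ m, A.interval m := Set.biUnion_univ _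
        _ = ⋃ m, (L m ∪ R m) := iUnion_congr fun m => hsplit m
        _ = (⋃ m, L m) ∪ (⋃ m, R m) := iUnion_union_distrib _ _
    rw [h2, image_union, closure_union] at h1
    exact h1
  have hamem : upt u a ∈ (ulim u A.interval \ {upt u x}) ∩
      closure (stoneCechUnit '' (⋃ m, L m)) := by
    refine ⟨⟨hulim a haI, ?_⟩, ?_⟩
    · simpa using hax
    · exact upt_mem_closure u a (Filter.Eventually.of_forall fun m =>
        mem_iUnion.mpr ⟨m, haL m⟩)
  have hbmem : upt u b ∈ (ulim u A.interval \ {upt u x}) ∩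
      closure (stoneCechUnit '' (⋃ m, R m)) := by
    refine ⟨⟨hulim b hbI, ?_⟩, ?_⟩
    · simpa using hbx
    · exact upt_mem_closure u b (Filter.Eventually.of_forall fun m =>
        mem_iUnion.mpr ⟨m, hbR m⟩)
  obtain ⟨p, ⟨hpK, hpne⟩, hpL, hpR⟩ := hcon
    (closure (stoneCechUnit '' (⋃ m, L m))) (closure (stoneCechUnit '' (⋃ m, R m)))
    isClosed_closure isClosed_closure hcover ⟨_, hamem⟩ ⟨_, hbmem⟩
  exact hpne (hkey p hpK hpL hpR)
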